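/- Let (X,f) be a topological dynamical system and A ⊆ X a closed set. Then the following are equivalent: (1) A is a basic set; (2) for every x ∈ X, |O(x) ∩ A| ≤ 1 and the closure of O(x) meets A; (3) for every x ∈ X, |O(x) ∩ A| ≤ 1 and ω(x) ∩ A ≠ ∅; (4) for every x ∈ X, |O(x) ∩ A| ≤ 1 and α(x) ∩ A ≠ ∅; (5) for every x ∈ X, |O(x) ∩ A| ≤ 1, and for every minimal set M, M ∩ A ≠ ∅. -/

import Mathlib

open Set

/-- The full orbit `{fⁿ(x) : n ∈ ℤ}` of a point under a homeomorphism. -/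
def orbitZ {X : Type*} [TopologicalSpace X] (f : X ≃ₜ X) (x : X) : Set X :=
  {y | ∃ n : ℤ, (f.toEquiv ^ n) x = y}

/-- `O(A) = ⋃_{n ∈ ℤ} fⁿ(A)`. -/
def orbitSetZ {X : Type*} [TopologicalSpace X] (f : X ≃ₜ X) (A : Set X) : Set X :=
  ⋃ n : ℤ, (f.toEquiv ^ n) '' A

/-- `O⁺(A) = ⋃_{n ≥ 0} fⁿ(A)`. -/
def orbitSetP {X : Type*} [TopologicalSpace X] (f : X ≃ₜ X) (A : Set X) : Set X :=
  ⋃ n : ℕ, (f.toEquiv ^ (n : ℤ)) '' A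

/-- `O⁻(A) = ⋃_{n ≤ 0} fⁿ(A)`. -/
def orbitSetN {X : Type*} [TopologicalSpace X] (f : X ≃ₜ X) (A : Set X) : Set X :=
  ⋃ n : ℕ, (f.toEquiv ^ (-(n : ℤ))) '' A

/-- The ω-limit set of a point. -/
def omegaSet {X : Type*} [TopologicalSpace X] (f : X ≃ₜ X) (x : X) : Set X :=
  ⋂ n : ℕ, closure {y | ∃ m : ℕ, n ≤ m ∧ (f.toEquiv ^ (m : ℤ)) x = y}

/-- The α-limit set of a point. -/
def alphaSet {X : Type*} [TopologicalSpace X] (f : X ≃ₜ X) (x : X) : Set X :=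
  ⋂ n : ℕ, closure {y | ∃ m : ℕ, n ≤ m ∧ (f.toEquiv ^ (-(m : ℤ))) x = y}

/-- A minimal set: nonempty, closed, invariant, and every orbit in it is dense in it. -/
def IsMinimalSet {X : Type*} [TopologicalSpace X] (f : X ≃ₜ X) (M : Set X) : Prop :=
  M.Nonempty ∧ IsClosed M ∧ f '' M = M ∧ ∀ x ∈ M, M ⊆ closure (orbitZ f x)

/-- `M_f`: the closure of the union of all minimal sets. -/
def minimalUnion {X : Type*} [TopologicalSpace X] (f : X ≃ₜ X) : Set X :=
  closure (⋃₀ {M | IsMinimalSet f M})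

/-- A wandering point. -/
def IsWandering {X : Type*} [TopologicalSpace X] (f : X ≃ₜ X) (x : X) : Prop :=
  ∃ U : Set X, IsOpen U ∧ x ∈ U ∧ ∀ n : ℤ, n ≠ 0 → (f.toEquiv ^ n) '' U ∩ U = ∅

/-- `Ω_f`: the set of non-wandering points. -/
def nonWandering {X : Type*} [TopologicalSpace X] (f : X ≃ₜ X) : Set X :=
  {x | ¬ IsWandering f x}

/-- A quasi-section: a closed set every open neighborhood of which has full orbit. -/
def IsQuasiSection {X : Type*} [TopologicalSpace X] (f : X ≃ₜ X) (A : Set X) : Prop :=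
  IsClosed A ∧ ∀ U : Set X, IsOpen U → A ⊆ U → orbitSetZ f U = Set.univ

/-- A minimal quasi-section (minimal w.r.t. inclusion among quasi-sections). -/
def IsMinimalQuasiSection {X : Type*} [TopologicalSpace X] (f : X ≃ₜ X) (A : Set X) : Prop :=
  IsQuasiSection f A ∧ ∀ B : Set X, IsQuasiSection f B → B ⊆ A → B = A

/-- A basic set: a quasi-section meeting every orbit in at most one point. -/
def IsBasicSet {X : Type*} [TopologicalSpace X] (f : X ≃ₜ X) (A : Set X) : Prop :=
  IsQuasiSection f A ∧ ∀ x : X, (orbitZ f x ∩ A).Subsingleton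

/-- A minimal basic set (minimal w.r.t. inclusion among basic sets). -/
def IsMinimalBasicSet {X : Type*} [TopologicalSpace X] (f : X ≃ₜ X) (A : Set X) : Prop :=
  IsBasicSet f A ∧ ∀ B : Set X, IsBasicSet f B → B ⊆ A → B = A

/-- Densely aperiodic: the points with infinite orbit are dense. -/
def DenselyAperiodic {X : Type*} [TopologicalSpace X] (f : X ≃ₜ X) : Prop :=
  Dense {x : X | (orbitZ f x).Infinite}

namespace Stmt7Aux

variable {X : Type*} [TopologicalSpace X] (f : X ≃ₜ X)

lemma continuous_zpow (n : ℤ) : Continuous ⇑(f.toEquiv ^ n) := by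
  induction n using Int.induction_on with
  | zero => simpa using continuous_id
  | succ k ih =>
      have h : ⇑(f.toEquiv ^ ((k : ℤ) + 1)) = ⇑(f.toEquiv ^ (k : ℤ)) ∘ ⇑f := by
        ext x; simp [zpow_add_one, Equiv.Perm.mul_apply]
      rw [h]; exact ih.comp f.continuous
  | pred k ih =>
      have h : ⇑(f.toEquiv ^ (-(k : ℤ) - 1)) = ⇑(f.toEquiv ^ (-(k : ℤ))) ∘ ⇑f.symm := by
        ext x; simp [zpow_sub_one, Equiv.Perm.mul_apply, Equiv.Perm.inv_def]
      rw [h]; exact ih.comp f.symm.continuous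

def hpow (n : ℤ) : X ≃ₜ X where
  toEquiv := f.toEquiv ^ n
  continuous_toFun := continuous_zpow f n
  continuous_invFun := by
    show Continuous ⇑(f.toEquiv ^ n).symm
    have h : ⇑(f.toEquiv ^ n).symm = ⇑(f.toEquiv ^ (-n)) := by
      rw [← Equiv.Perm.inv_def, ← zpow_neg]
    rw [h]; exact continuous_zpow f (-n)

@[simp] lemma hpow_coe (n : ℤ) : ⇑(hpow f n) = ⇑(f.toEquiv ^ n) := rfl

lemma zpow_add_apply (a b : ℤ) (x : X) :
    (f.toEquiv ^ (a + b)) x = (f.toEquiv ^ a) ((f.toEquiv ^ b) x) := by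
  rw [zpow_add]; rfl

@[simp] lemma zpow_zero_apply (x : X) : (f.toEquiv ^ (0 : ℤ)) x = x := by simp

lemma zpow_one_apply (x : X) : (f.toEquiv ^ (1 : ℤ)) x = f x := by simp

lemma self_mem_orbitZ (x : X) : x ∈ orbitZ f x := ⟨0, by simp⟩

lemma mem_orbitZ (n : ℤ) (x : X) : (f.toEquiv ^ n) x ∈ orbitZ f x := ⟨n, rfl⟩

lemma symm_image_of_inv {K : Set X} (hK : f '' K = K) : f.symm '' K = K := by
  conv_lhs => rw [← hK]
  rw [← Set.image_comp]
  simp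

lemma zpow_image_of_inv {K : Set X} (hK : f '' K = K) (n : ℤ) :
    ⇑(f.toEquiv ^ n) '' K = K := by
  induction n using Int.induction_on with
  | zero => simp
  | succ k ih =>
      have h : ⇑(f.toEquiv ^ ((k : ℤ) + 1)) = ⇑(f.toEquiv ^ (k : ℤ)) ∘ ⇑f := by
        ext x; simp [zpow_add_one, Equiv.Perm.mul_apply]
      rw [h, Set.image_comp, hK, ih]
  | pred k ih =>
      have h : ⇑(f.toEquiv ^ (-(k : ℤ) - 1)) = ⇑(f.toEquiv ^ (-(k : ℤ))) ∘ ⇑f.symm := by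
        ext x; simp [zpow_sub_one, Equiv.Perm.mul_apply, Equiv.Perm.inv_def]
      rw [h, Set.image_comp, symm_image_of_inv f hK, ih]

lemma orbit_subset_of_inv {K : Set X} (hK : f '' K = K) {x : X} (hx : x ∈ K) :
    orbitZ f x ⊆ K := by
  rintro y ⟨n, rfl⟩
  rw [← zpow_image_of_inv f hK n]
  exact ⟨x, hx, rfl⟩

lemma image_orbitZ (x : X) : f '' orbitZ f x = orbitZ f x := by
  ext y
  constructor
  · rintro ⟨z, ⟨n, rfl⟩, rfl⟩
    exact ⟨1 + n, by rw [zpow_add_apply, zpow_one_apply]⟩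
  · rintro ⟨n, rfl⟩
    refine ⟨(f.toEquiv ^ (n - 1)) x, ⟨n - 1, rfl⟩, ?_⟩
    rw [← zpow_one_apply f, ← zpow_add_apply]
    norm_num

lemma closure_orbitZ_inv (x : X) : f '' closure (orbitZ f x) = closure (orbitZ f x) := by
  rw [f.image_closure, image_orbitZ]

def fwdSet (x : X) (n : ℕ) : Set X := {y | ∃ m : ℕ, n ≤ m ∧ (f.toEquiv ^ (m : ℤ)) x = y}

lemma omegaSet_eq (x : X) : omegaSet f x = ⋂ n : ℕ, closure (fwdSet f x n) := rfl

lemma fwdSet_antitone (x : X) {n n' : ℕ} (h : n ≤ n') : fwdSet f x n' ⊆ fwdSet f x n := by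
  rintro y ⟨m, hm, rfl⟩; exact ⟨m, h.trans hm, rfl⟩

lemma fwdSet_subset_orbit (x : X) (n : ℕ) : fwdSet f x n ⊆ orbitZ f x := by
  rintro y ⟨m, _, rfl⟩; exact ⟨(m : ℤ), rfl⟩

lemma omega_nonempty [CompactSpace X] (x : X) : (omegaSet f x).Nonempty := by
  rw [omegaSet_eq]
  apply IsCompact.nonempty_iInter_of_directed_nonempty_isCompact_isClosed
  · intro i j
    exact ⟨max i j, closure_mono (fwdSet_antitone f x (le_max_left i j)),
      closure_mono (fwdSet_antitone f x (le_max_right i j))⟩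
  · exact fun n => ⟨(f.toEquiv ^ (n : ℤ)) x, subset_closure ⟨n, le_refl n, rfl⟩⟩
  · exact fun n => isClosed_closure.isCompact
  · exact fun n => isClosed_closure

lemma omega_closed (x : X) : IsClosed (omegaSet f x) := by
  rw [omegaSet_eq]; exact isClosed_iInter fun n => isClosed_closure

lemma omega_subset_of_inv {K : Set X} (hc : IsClosed K) (hK : f '' K = K) {x : X}
    (hx : x ∈ K) : omegaSet f x ⊆ K := by
  rw [omegaSet_eq]
  exact (iInter_subset _ 0).trans (closure_minimal
    ((fwdSet_subset_orbit f x 0).trans (orbit_subset_of_inv f hK hx)) hc)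

lemma omega_subset_closure_orbit (x : X) : omegaSet f x ⊆ closure (orbitZ f x) :=
  omega_subset_of_inv f isClosed_closure (closure_orbitZ_inv f x) (subset_closure (self_mem_orbitZ f x))

lemma image_fwdSet (x : X) (n : ℕ) : f '' fwdSet f x n = fwdSet f x (n + 1) := by
  ext z
  constructor
  · rintro ⟨y, ⟨m, hm, rfl⟩, rfl⟩
    refine ⟨m + 1, by omega, ?_⟩
    push_cast
    rw [add_comm, zpow_add_apply, zpow_one_apply]
  · rintro ⟨m, hm, rfl⟩
    refine ⟨(f.toEquiv ^ ((m - 1 : ℕ) : ℤ)) x, ⟨m - 1, by omega, rfl⟩, ?_⟩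
    rw [← zpow_one_apply f, ← zpow_add_apply]
    congr 1
    push_cast [Nat.cast_sub (by omega : 1 ≤ m)]
    ring_nf

lemma image_omega (x : X) : f '' omegaSet f x = omegaSet f x := by
  rw [omegaSet_eq]
  rw [Set.image_iInter f.bijective]
  have key : ∀ n : ℕ, ⇑f '' closure (fwdSet f x n) = closure (fwdSet f x (n + 1)) := fun n => by
    rw [f.image_closure, image_fwdSet]
  rw [iInter_congr key]
  apply Subset.antisymm
  · intro y hy
    rw [mem_iInter] at hy ⊢
    exact fun n => closure_mono (fwdSet_antitone f x (Nat.le_succ n)) (hy n)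
  · intro y hy
    rw [mem_iInter] at hy ⊢
    exact fun n => hy (n + 1)

lemma symm_zpow (m : ℤ) : f.symm.toEquiv ^ m = f.toEquiv ^ (-m) := by
  rw [show f.symm.toEquiv = (f.toEquiv)⁻¹ from rfl, inv_zpow, zpow_neg]

lemma alphaSet_eq (x : X) : alphaSet f x = omegaSet f.symm x := by
  unfold alphaSet omegaSet
  simp only [symm_zpow f]

lemma orbitZ_symm (x : X) : orbitZ f.symm x = orbitZ f x := by
  ext y
  constructor
  · rintro ⟨n, rfl⟩; exact ⟨-n, by rw [← symm_zpow]⟩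
  · rintro ⟨n, rfl⟩; exact ⟨-n, by rw [symm_zpow, neg_neg]⟩

lemma exists_minimalSet [CompactSpace X] (K : Set X) (hKc : IsClosed K) (hKn : K.Nonempty)
    (hKi : f '' K = K) : ∃ M, M ⊆ K ∧ IsMinimalSet f M := by
  set S : Set (Set X) := {N | N.Nonempty ∧ IsClosed N ∧ f '' N = N} with hS
  have hchain : ∀ c ⊆ S, IsChain (· ⊆ ·) c → c.Nonempty →
      ∃ lb ∈ S, ∀ s ∈ c, lb ⊆ s := by
    intro c hcS hchain hcne
    refine ⟨⋂₀ c, ⟨?_, ?_, ?_⟩, fun s hs => sInter_subset_of_mem hs⟩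
    · rw [sInter_eq_iInter]
      have : Nonempty c := hcne.to_subtype
      apply IsCompact.nonempty_iInter_of_directed_nonempty_isCompact_isClosed
      · rintro ⟨i, hi⟩ ⟨j, hj⟩
        rcases hchain.total hi hj with h | h
        · exact ⟨⟨i, hi⟩, le_refl _, h⟩
        · exact ⟨⟨j, hj⟩, h, le_refl _⟩
      · exact fun i => (hcS i.2).1
      · exact fun i => (hcS i.2).2.1.isCompact
      · exact fun i => (hcS i.2).2.1
    · exact isClosed_sInter fun s hs => (hcS hs).2.1
    · rw [sInter_eq_iInter, Set.image_iInter f.bijective]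
      exact iInter_congr fun i => (hcS i.2).2.2
  obtain ⟨M, hMK, hM⟩ := zorn_superset_nonempty S hchain K ⟨hKn, hKc, hKi⟩
  obtain ⟨hMne, hMcl, hMinv⟩ := hM.prop
  refine ⟨M, hMK, hMne, hMcl, hMinv, ?_⟩
  intro x hx
  have horb : orbitZ f x ⊆ M := orbit_subset_of_inv f hMinv hx
  have hNS : closure (orbitZ f x) ∈ S :=
    ⟨⟨x, subset_closure (self_mem_orbitZ f x)⟩, isClosed_closure, closure_orbitZ_inv f x⟩
  exact hM.2 hNS (closure_minimal horb hMcl)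

end Stmt7Aux

open Stmt7Aux

theorem stmt7 {X : Type*} [TopologicalSpace X] [CompactSpace X] [T2Space X] [Nonempty X] (f : X ≃ₜ X)
    (A : Set X) (hA : IsClosed A) :
    List.TFAE [IsBasicSet f A,
      ∀ x : X, (orbitZ f x ∩ A).Subsingleton ∧ (closure (orbitZ f x) ∩ A).Nonempty,
      ∀ x : X, (orbitZ f x ∩ A).Subsingleton ∧ (omegaSet f x ∩ A).Nonempty,
      ∀ x : X, (orbitZ f x ∩ A).Subsingleton ∧ (alphaSet f x ∩ A).Nonempty,
      (∀ x : X, (orbitZ f x ∩ A).Subsingleton) ∧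
        ∀ M : Set X, IsMinimalSet f M → (M ∩ A).Nonempty] := by
  have key : ∀ (g : X ≃ₜ X), (∀ x : X, (closure (orbitZ g x) ∩ A).Nonempty) →
      ∀ x : X, (omegaSet g x ∩ A).Nonempty := by
    intro g hg x
    obtain ⟨y, hy⟩ := omega_nonempty g x
    obtain ⟨z, hz1, hz2⟩ := hg y
    refine ⟨z, ?_, hz2⟩
    exact closure_minimal (orbit_subset_of_inv g (image_omega g x) hy) (omega_closed g x) hz1
  tfae_have 1 → 2 := by
    rintro ⟨⟨hAc, hq⟩, hsub⟩
    intro x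
    refine ⟨hsub x, ?_⟩
    by_contra hempty
    rw [Set.not_nonempty_iff_eq_empty] at hempty
    have hU : IsOpen (closure (orbitZ f x))ᶜ := isClosed_closure.isOpen_compl
    have hAU : A ⊆ (closure (orbitZ f x))ᶜ := fun a ha hmem =>
      (Set.eq_empty_iff_forall_notMem.mp hempty a) ⟨hmem, ha⟩
    have hfull := hq _ hU hAU
    have hx : x ∈ orbitSetZ f (closure (orbitZ f x))ᶜ := hfull ▸ Set.mem_univ x
    simp only [orbitSetZ, mem_iUnion, mem_image] at hx
    obtain ⟨n, y, hyU, hyx⟩ := hx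
    apply hyU
    have hy : y = (f.toEquiv ^ (-n)) x := by
      rw [← hyx, ← zpow_add_apply]; simp
    rw [hy]
    exact subset_closure (mem_orbitZ f (-n) x)
  tfae_have 2 → 3 := fun h x => ⟨(h x).1, key f (fun y => (h y).2) x⟩
  tfae_have 3 → 2 := fun h x => ⟨(h x).1,
    ((h x).2).mono (inter_subset_inter_left A (omega_subset_closure_orbit f x))⟩
  tfae_have 2 → 4 := by
    intro h x
    refine ⟨(h x).1, ?_⟩
    rw [alphaSet_eq]
    exact key f.symm (fun y => by rw [orbitZ_symm]; exact (h y).2) x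
  tfae_have 4 → 2 := by
    intro h x
    refine ⟨(h x).1, ((h x).2).mono (inter_subset_inter_left A ?_)⟩
    rw [alphaSet_eq]
    calc omegaSet f.symm x ⊆ closure (orbitZ f.symm x) := omega_subset_closure_orbit f.symm x
      _ = closure (orbitZ f x) := by rw [orbitZ_symm]
  tfae_have 3 → 5 := by
    intro h
    refine ⟨fun x => (h x).1, ?_⟩
    rintro M ⟨⟨x, hx⟩, hMcl, hMinv, -⟩
    exact ((h x).2).mono (inter_subset_inter_left A (omega_subset_of_inv f hMcl hMinv hx))
  tfae_have 5 → 1 := by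
    rintro ⟨hsub, hmin⟩
    refine ⟨⟨hA, ?_⟩, hsub⟩
    intro U hU hAU
    rw [Set.eq_univ_iff_forall]
    intro x
    obtain ⟨M, hMK, hMmin⟩ := exists_minimalSet f (closure (orbitZ f x)) isClosed_closure
      ⟨x, subset_closure (self_mem_orbitZ f x)⟩ (closure_orbitZ_inv f x)
    obtain ⟨y, hyM, hyA⟩ := hmin M hMmin
    obtain ⟨z, hzU, hzO⟩ := mem_closure_iff.mp (hMK hyM) U hU (hAU hyA)
    obtain ⟨n, rfl⟩ := hzO
    simp only [orbitSetZ, mem_iUnion, mem_image]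
    exact ⟨-n, (f.toEquiv ^ n) x, hzU, by rw [← zpow_add_apply]; simp⟩
  tfae_finish
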